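/- If there exists z ∈ ker B with f(z) ≠ 0 (the bending dominated case), then u⁰ ≠ 0 and lim_{ε→0⁺} ‖u^ε‖_H = ‖u⁰‖_H ≠ 0; conversely, if f(z) = 0 for all z ∈ ker B then u⁰ = 0. -/

import Mathlib

open RealInnerProductSpace Filter Topology

set_option maxHeartbeats 4000000 in
/-- If there exists z ∈ ker B with f(z) ≠ 0 (the bending dominated case), then u⁰ ≠ 0 and
lim_{ε→0⁺} ‖u^ε‖_H = ‖u⁰‖_H ≠ 0; conversely, if f(z) = 0 for all z ∈ ker B then u⁰ = 0. -/
theorem stmt_5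
    {H U V : Type*}
    [NormedAddCommGroup H] [InnerProductSpace ℝ H] [CompleteSpace H]
    [NormedAddCommGroup U] [InnerProductSpace ℝ U] [CompleteSpace U]
    [NormedAddCommGroup V] [InnerProductSpace ℝ V] [CompleteSpace V]
    (A : H →L[ℝ] U) (B : H →L[ℝ] V)
    (c₁ c₂ : ℝ) (hc₁ : 0 < c₁) (hc₂ : 0 < c₂)
    (hlow : ∀ v : H, c₁ * ‖v‖ ≤ ‖A v‖ + ‖B v‖)
    (hup : ∀ v : H, ‖A v‖ + ‖B v‖ ≤ c₂ * ‖v‖)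
    (f : H →L[ℝ] ℝ)
    (u : ℝ → H)
    (hu : ∀ ε : ℝ, 0 < ε → ∀ v : H,
      ⟪A (u ε), A v⟫ + (ε ^ 2)⁻¹ * ⟪B (u ε), B v⟫ = f v)
    (u₀ : H) (hu₀ : B u₀ = 0)
    (hu₀' : ∀ v : H, B v = 0 → ⟪A u₀, A v⟫ = f v) :
    ((∃ z : H, B z = 0 ∧ f z ≠ 0) →
      u₀ ≠ 0 ∧ Tendsto (fun ε : ℝ => ‖u ε‖) (𝓝[>] 0) (𝓝 ‖u₀‖) ∧ ‖u₀‖ ≠ 0) ∧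
    ((∀ z : H, B z = 0 → f z = 0) → u₀ = 0) := by
  -- energy identity
  have energy : ∀ ε : ℝ, 0 < ε →
      ‖A (u ε)‖^2 + (ε^2)⁻¹ * ‖B (u ε)‖^2 = f (u ε) := by
    intro ε hε
    have h := hu ε hε (u ε)
    rwa [real_inner_self_eq_norm_sq, real_inner_self_eq_norm_sq] at h
  -- variational principle
  have hq : ∀ ε : ℝ, 0 < ε → ∀ v : H,
      ‖A (u ε)‖^2 + (ε^2)⁻¹ * ‖B (u ε)‖^2 - 2 * f (u ε)
        ≤ ‖A v‖^2 + (ε^2)⁻¹ * ‖B v‖^2 - 2 * f v := by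
    intro ε hε v
    have hd := hu ε hε (v - u ε)
    have hinv : (0:ℝ) < (ε^2)⁻¹ := by positivity
    have hvA : A v = A (u ε) + A (v - u ε) := by rw [← map_add]; congr 1; abel
    have hvB : B v = B (u ε) + B (v - u ε) := by rw [← map_add]; congr 1; abel
    have hvf : f v = f (u ε) + f (v - u ε) := by rw [← map_add]; congr 1; abel
    have hA : ‖A v‖^2 = ‖A (u ε)‖^2 + 2*⟪A (u ε), A (v - u ε)⟫ + ‖A (v - u ε)‖^2 := by
      rw [hvA, norm_add_sq_real]
    have hB : (ε^2)⁻¹ * ‖B v‖^2 = (ε^2)⁻¹ * ‖B (u ε)‖^2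
        + 2*((ε^2)⁻¹ * ⟪B (u ε), B (v - u ε)⟫) + (ε^2)⁻¹ * ‖B (v - u ε)‖^2 := by
      rw [hvB, norm_add_sq_real]; ring
    nlinarith [sq_nonneg ‖A (v - u ε)‖, mul_nonneg hinv.le (sq_nonneg ‖B (v - u ε)‖)]
  -- monotonicity of ε ↦ f (u ε)
  have mono : ∀ ε ε' : ℝ, 0 < ε' → ε' ≤ ε → f (u ε') ≤ f (u ε) := by
    intro ε ε' hε' hle
    have hε : 0 < ε := lt_of_lt_of_le hε' hle
    have h1 := hq ε hε (u ε')
    have e1 := energy ε hε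
    have e2 := energy ε' hε'
    have hinv : (ε^2)⁻¹ ≤ (ε'^2)⁻¹ := inv_anti₀ (by positivity) (by nlinarith)
    nlinarith [mul_le_mul_of_nonneg_right hinv (sq_nonneg ‖B (u ε')‖)]
  -- lower bound
  have hAu₀ : ‖A u₀‖^2 = f u₀ := by
    rw [← real_inner_self_eq_norm_sq]; exact hu₀' u₀ hu₀
  have glb : ∀ ε : ℝ, 0 < ε → f u₀ ≤ f (u ε) := by
    intro ε hε
    have h1 := hq ε hε u₀
    have e1 := energy ε hε
    rw [hu₀] at h1
    simp only [norm_zero] at h1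
    nlinarith
  -- uniform bound
  set M : ℝ := 2 * ‖f‖ / c₁^2 with hMdef
  have hM : ∀ ε : ℝ, 0 < ε → ε ≤ 1 → ‖u ε‖ ≤ M := by
    intro ε hε hε1
    have e := energy ε hε
    have hfb : f (u ε) ≤ ‖f‖ * ‖u ε‖ :=
      le_trans (le_abs_self _) (by simpa [Real.norm_eq_abs] using f.le_opNorm (u ε))
    have h1 : (1:ℝ) ≤ (ε^2)⁻¹ := by
      rw [le_inv_comm₀ one_pos (by positivity)]; nlinarith
    have hl := hlow (u ε)
    have hsq : (c₁ * ‖u ε‖)^2 ≤ (‖A (u ε)‖ + ‖B (u ε)‖)^2 :=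
      pow_le_pow_left₀ (by positivity) hl 2
    have key : c₁^2 * ‖u ε‖^2 ≤ 2 * ‖f‖ * ‖u ε‖ := by
      nlinarith [hsq, sq_nonneg (‖A (u ε)‖ - ‖B (u ε)‖),
        mul_le_mul_of_nonneg_right h1 (sq_nonneg ‖B (u ε)‖)]
    rw [hMdef, le_div_iff₀ (by positivity : (0:ℝ) < c₁^2)]
    rcases eq_or_lt_of_le (norm_nonneg (u ε)) with h | h
    · rw [← h]; nlinarith [norm_nonneg f]
    · nlinarith
  set C : ℝ := ‖f‖ * M with hCdef
  have hC0 : 0 ≤ C := by have : 0 ≤ M := by positivity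
                         positivity
  have hC : ∀ ε : ℝ, 0 < ε → ε ≤ 1 → f (u ε) ≤ C := by
    intro ε hε hε1
    have hfb : f (u ε) ≤ ‖f‖ * ‖u ε‖ :=
      le_trans (le_abs_self _) (by simpa [Real.norm_eq_abs] using f.le_opNorm (u ε))
    exact hfb.trans (mul_le_mul_of_nonneg_left (hM ε hε hε1) (norm_nonneg f))
  -- bound on B (u ε)
  have hBb : ∀ ε : ℝ, 0 < ε → ε ≤ 1 → ‖B (u ε)‖ ≤ ε * Real.sqrt C := by
    intro ε hε hε1
    have e := energy ε hε
    have hc := hC ε hε hε1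
    have hinv : (0:ℝ) < (ε^2)⁻¹ := by positivity
    have hb2 : ‖B (u ε)‖^2 ≤ ε^2 * C := by
      have h1 : (ε^2)⁻¹ * ‖B (u ε)‖^2 ≤ C := by nlinarith [sq_nonneg ‖A (u ε)‖]
      have h2 := mul_le_mul_of_nonneg_left h1 (sq_nonneg ε)
      have h3 : ε^2 * ((ε^2)⁻¹ * ‖B (u ε)‖^2) = ‖B (u ε)‖^2 := by
        field_simp
      linarith [h2, h3.symm.le, h3.le]
    calc ‖B (u ε)‖ = Real.sqrt (‖B (u ε)‖^2) := (Real.sqrt_sq (norm_nonneg _)).symm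
      _ ≤ Real.sqrt (ε^2 * C) := Real.sqrt_le_sqrt hb2
      _ = ε * Real.sqrt C := by
          rw [Real.sqrt_mul (sq_nonneg ε), Real.sqrt_sq hε.le]
  -- key Cauchy estimate on A (u ε)
  have keyA : ∀ ε ε' : ℝ, 0 < ε' → 2*ε' ≤ ε →
      ‖A (u ε) - A (u ε')‖^2 ≤ 2*(f (u ε) - f (u ε')) := by
    intro ε ε' hε' h2
    have hε : 0 < ε := by linarith
    have hI := hu ε hε (u ε')
    have hII := hu ε' hε' (u ε)
    rw [real_inner_comm (A (u ε)) (A (u ε')), real_inner_comm (B (u ε)) (B (u ε'))] at hII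
    have hmono' : f (u ε') ≤ f (u ε) := mono ε ε' hε' (by linarith)
    have hsub : ((ε'^2)⁻¹ - (ε^2)⁻¹) * ⟪B (u ε), B (u ε')⟫ = f (u ε) - f (u ε') := by
      linarith [hI, hII]
    have h4 : 4 * (ε^2)⁻¹ ≤ (ε'^2)⁻¹ := by
      have h1 : (ε^2)⁻¹ ≤ ((2*ε')^2)⁻¹ := inv_anti₀ (by positivity) (by nlinarith)
      have h2' : ((2*ε')^2)⁻¹ = (ε'^2)⁻¹ / 4 := by
        field_simp; ring
      rw [h2'] at h1; linarith
    have hinvε : (0:ℝ) < (ε^2)⁻¹ := by positivity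
    have ht : 0 < (ε'^2)⁻¹ - (ε^2)⁻¹ := by linarith
    have hs0 : 0 ≤ ⟪B (u ε), B (u ε')⟫ := by
      by_contra hcon
      push_neg at hcon
      nlinarith
    have hkey : 2*(ε^2)⁻¹*⟪B (u ε), B (u ε')⟫ ≤ (2/3)*(f (u ε) - f (u ε')) := by
      have h3 : 3*(ε^2)⁻¹*⟪B (u ε), B (u ε')⟫
          ≤ ((ε'^2)⁻¹ - (ε^2)⁻¹)*⟪B (u ε), B (u ε')⟫ :=
        mul_le_mul_of_nonneg_right (by linarith) hs0
      nlinarith [mul_nonneg hinvε.le hs0]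
    have hnorm : ‖A (u ε) - A (u ε')‖^2
        = ‖A (u ε)‖^2 - 2*⟪A (u ε), A (u ε')⟫ + ‖A (u ε')‖^2 := by
      rw [norm_sub_sq_real]
    have e1 := energy ε hε
    have e2 := energy ε' hε'
    have ha1 : ‖A (u ε)‖^2 ≤ f (u ε) := by
      nlinarith [mul_nonneg hinvε.le (sq_nonneg ‖B (u ε)‖)]
    have ha2 : ‖A (u ε')‖^2 ≤ f (u ε') := by
      have hinvε' : (0:ℝ) < (ε'^2)⁻¹ := by positivity
      nlinarith [mul_nonneg hinvε'.le (sq_nonneg ‖B (u ε')‖)]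
    -- p = f (u ε') - (ε^2)⁻¹ * s  from hI
    nlinarith [hI]
  -- infimum
  set g : ℝ → ℝ := fun ε => f (u ε) with hgdef
  set S : Set ℝ := g '' Set.Ioc (0:ℝ) 1 with hSdef
  have hSne : S.Nonempty := ⟨g 1, 1, ⟨zero_lt_one, le_refl 1⟩, rfl⟩
  have hSbdd : BddBelow S := by
    refine ⟨f u₀, ?_⟩
    rintro x ⟨ε, hε, rfl⟩
    exact glb ε hε.1
  set L : ℝ := sInf S with hLdef
  have hLle : ∀ ε : ℝ, 0 < ε → ε ≤ 1 → L ≤ f (u ε) := by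
    intro ε hε hε1
    exact csInf_le hSbdd ⟨ε, ⟨hε, hε1⟩, rfl⟩
  -- Cauchy
  have hcauchy : Cauchy (Filter.map u (𝓝[>] (0:ℝ))) := by
    rw [Metric.cauchy_iff]
    refine ⟨Filter.map_neBot, fun δ hδ => ?_⟩
    have hδ'pos : (0:ℝ) < (c₁*δ)^2/32 := by
      have : 0 < c₁*δ := mul_pos hc₁ hδ
      positivity
    obtain ⟨x, hxS, hxlt⟩ := Real.lt_sInf_add_pos hSne hδ'pos
    obtain ⟨ε₁, hε₁, rfl⟩ := hxS
    have hsq : (0:ℝ) < Real.sqrt C + 1 := by positivity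
    set ε₀ : ℝ := min ε₁ (c₁*δ/(8*(Real.sqrt C+1))) with hε₀def
    have hε₀pos : 0 < ε₀ := lt_min hε₁.1 (by positivity)
    refine ⟨u '' Set.Ioo 0 ε₀,
      Filter.image_mem_map (Ioo_mem_nhdsGT_of_mem ⟨le_refl 0, hε₀pos⟩), ?_⟩
    have est : ∀ p q : ℝ, 0 < q → q ≤ p → p < ε₀ → dist (u p) (u q) < δ := by
      intro p q hq0 hqp hpε₀
      have hp0 : 0 < p := lt_of_lt_of_le hq0 hqp
      have hpε₁ : p ≤ ε₁ := le_of_lt (lt_of_lt_of_le hpε₀ (min_le_left _ _))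
      have hp1 : p ≤ 1 := hpε₁.trans hε₁.2
      have hq1 : q ≤ 1 := hqp.trans hp1
      -- A-part
      have hgp : f (u p) < L + (c₁*δ)^2/32 :=
        lt_of_le_of_lt (mono ε₁ p hp0 hpε₁) hxlt
      have hgq : f (u q) < L + (c₁*δ)^2/32 :=
        lt_of_le_of_lt (mono ε₁ q hq0 (hqp.trans hpε₁)) hxlt
      have hr0 : 0 < q/2 := by linarith
      have hr1 : q/2 ≤ 1 := by linarith
      have hgr : L ≤ f (u (q/2)) := hLle (q/2) hr0 hr1
      have k1 := keyA p (q/2) hr0 (by linarith)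
      have k2 := keyA q (q/2) hr0 (by linarith)
      have hbApr : ‖A (u p) - A (u (q/2))‖^2 ≤ (c₁*δ)^2/16 := by nlinarith
      have hbAqr : ‖A (u q) - A (u (q/2))‖^2 ≤ (c₁*δ)^2/16 := by nlinarith
      have hcd : 0 < c₁*δ := mul_pos hc₁ hδ
      have hApr : ‖A (u p) - A (u (q/2))‖ ≤ c₁*δ/4 := by
        nlinarith [norm_nonneg (A (u p) - A (u (q/2)))]
      have hAqr : ‖A (u q) - A (u (q/2))‖ ≤ c₁*δ/4 := by
        nlinarith [norm_nonneg (A (u q) - A (u (q/2)))]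
      have hA : ‖A (u p) - A (u q)‖ ≤ c₁*δ/2 := by
        have hdecomp : A (u p) - A (u q)
            = (A (u p) - A (u (q/2))) - (A (u q) - A (u (q/2))) := by abel
        calc ‖A (u p) - A (u q)‖
            ≤ ‖A (u p) - A (u (q/2))‖ + ‖A (u q) - A (u (q/2))‖ := by
              rw [hdecomp]; exact norm_sub_le _ _
          _ ≤ c₁*δ/2 := by linarith
      -- B-part
      have hBp := hBb p hp0 hp1
      have hBq := hBb q hq0 hq1
      have hε₀le : ε₀ ≤ c₁*δ/(8*(Real.sqrt C+1)) := min_le_right _ _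
      have hsC : 0 ≤ Real.sqrt C := Real.sqrt_nonneg C
      have hB : ‖B (u p) - B (u q)‖ ≤ c₁*δ/4 := by
        have h1 : ‖B (u p) - B (u q)‖ ≤ ‖B (u p)‖ + ‖B (u q)‖ := norm_sub_le _ _
        have h2 : ‖B (u p)‖ + ‖B (u q)‖ ≤ 2*ε₀*Real.sqrt C := by
          have hp' : p * Real.sqrt C ≤ ε₀ * Real.sqrt C :=
            mul_le_mul_of_nonneg_right hpε₀.le hsC
          have hq' : q * Real.sqrt C ≤ ε₀ * Real.sqrt C :=
            mul_le_mul_of_nonneg_right (by linarith) hsC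
          linarith
        have h3 : 2*ε₀*Real.sqrt C ≤ c₁*δ/4 := by
          have hne : (0:ℝ) < Real.sqrt C + 1 := by positivity
          have key : (c₁*δ/(8*(Real.sqrt C+1))) * (Real.sqrt C+1) = c₁*δ/8 := by
            field_simp
          have e1 : ε₀ * Real.sqrt C ≤ (c₁*δ/(8*(Real.sqrt C+1))) * (Real.sqrt C+1) :=
            mul_le_mul hε₀le (by linarith) hsC (by positivity)
          rw [key] at e1
          linarith
        linarith
      -- combine
      have hl := hlow (u p - u q)
      have hAB : ‖A (u p - u q)‖ + ‖B (u p - u q)‖ ≤ 3/4*(c₁*δ) := by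
        rw [map_sub, map_sub]; linarith
      have : c₁ * ‖u p - u q‖ ≤ 3/4*(c₁*δ) := le_trans hl hAB
      have hfin : ‖u p - u q‖ ≤ 3/4*δ := by
        nlinarith
      rw [dist_eq_norm]
      linarith
    rintro x ⟨a, ha, rfl⟩ y ⟨b, hb, rfl⟩
    rcases le_total b a with hab | hab
    · exact est a b hb.1 hab ha.2
    · rw [dist_comm]; exact est b a ha.1 hab hb.2
  obtain ⟨ustar, hustar⟩ := CompleteSpace.complete hcauchy
  have hustar : Tendsto u (𝓝[>] (0:ℝ)) (𝓝 ustar) := hustar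
  -- B ustar = 0
  have hBtend : Tendsto (fun ε => B (u ε)) (𝓝[>] (0:ℝ)) (𝓝 (B ustar)) :=
    (B.continuous.tendsto _).comp hustar
  have hB0 : Tendsto (fun ε => B (u ε)) (𝓝[>] (0:ℝ)) (𝓝 0) := by
    rw [tendsto_zero_iff_norm_tendsto_zero]
    have hev : ∀ᶠ ε in 𝓝[>] (0:ℝ), ‖B (u ε)‖ ≤ ε * Real.sqrt C := by
      filter_upwards [Ioc_mem_nhdsGT_of_mem ⟨le_refl (0:ℝ), zero_lt_one⟩] with ε hε
      exact hBb ε hε.1 hε.2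
    have hten : Tendsto (fun ε : ℝ => ε * Real.sqrt C) (𝓝[>] (0:ℝ)) (𝓝 0) := by
      have h : Tendsto (fun ε : ℝ => ε * Real.sqrt C) (𝓝 (0:ℝ)) (𝓝 (0 * Real.sqrt C)) :=
        (continuous_id.mul continuous_const).tendsto 0
      rw [zero_mul] at h
      exact h.mono_left nhdsWithin_le_nhds
    exact squeeze_zero' (Eventually.of_forall fun _ => norm_nonneg _) hev hten
  have hBstar : B ustar = 0 := tendsto_nhds_unique hBtend hB0
  -- limit equation on the kernel
  have hK : ∀ v : H, B v = 0 → ⟪A ustar, A v⟫ = f v := by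
    intro v hv
    have h1 : Tendsto (fun ε => ⟪A (u ε), A v⟫) (𝓝[>] (0:ℝ)) (𝓝 ⟪A ustar, A v⟫) :=
      ((A.continuous.tendsto _).comp hustar).inner tendsto_const_nhds
    have h2 : ∀ᶠ ε in 𝓝[>] (0:ℝ), ⟪A (u ε), A v⟫ = f v := by
      filter_upwards [self_mem_nhdsWithin] with ε hε
      have h := hu ε hε v
      rw [hv, inner_zero_right] at h
      simpa using h
    have h3 : Tendsto (fun _ : ℝ => f v) (𝓝[>] (0:ℝ)) (𝓝 ⟪A ustar, A v⟫) :=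
      h1.congr' (h2.mono fun x hx => hx)
    exact tendsto_nhds_unique h3 tendsto_const_nhds
  -- identify
  have hident : ustar = u₀ := by
    have hBw : B (ustar - u₀) = 0 := by rw [map_sub, hBstar, hu₀, sub_zero]
    have h1 : ⟪A ustar, A (ustar - u₀)⟫ = f (ustar - u₀) := hK _ hBw
    have h2 : ⟪A u₀, A (ustar - u₀)⟫ = f (ustar - u₀) := hu₀' _ hBw
    have h3 : ⟪A (ustar - u₀), A (ustar - u₀)⟫ = 0 := by
      rw [map_sub, inner_sub_left]
      rw [map_sub] at h1 h2
      linarith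
    have h4 : A (ustar - u₀) = 0 := by
      rwa [inner_self_eq_zero] at h3
    have hl := hlow (ustar - u₀)
    rw [h4, hBw, norm_zero, norm_zero] at hl
    have h5 : ‖ustar - u₀‖ ≤ 0 := by nlinarith
    rw [← sub_eq_zero]
    exact norm_le_zero_iff.mp h5
  have htend : Tendsto (fun ε : ℝ => ‖u ε‖) (𝓝[>] (0:ℝ)) (𝓝 ‖u₀‖) := by
    rw [← hident]; exact hustar.norm
  constructor
  · rintro ⟨z, hz, hfz⟩
    have hne : u₀ ≠ 0 := by
      intro h0
      apply hfz
      have := hu₀' z hz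
      rw [h0] at this
      simpa using this.symm
    exact ⟨hne, htend, fun h => hne (norm_eq_zero.mp h)⟩
  · intro h
    have h1 : ⟪A u₀, A u₀⟫ = 0 := by rw [hu₀' u₀ hu₀]; exact h u₀ hu₀
    have h2 : A u₀ = 0 := by rwa [inner_self_eq_zero] at h1
    have hl := hlow u₀
    rw [h2, hu₀, norm_zero, norm_zero] at hl
    have h5 : ‖u₀‖ = 0 := le_antisymm (by nlinarith) (norm_nonneg _)
    exact norm_eq_zero.mp h5
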